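/- The free boundaries are ordered: for every z > z₀ and every w ≥ 0 satisfying erf(w·√(α₁/α₂)) = H(z), one has w < z. In particular, the coefficient ξ₂ determined from ξ₁ by erf(ξ₂·√(α₁/α₂)) = H(ξ₁) satisfies ξ₂ < ξ₁. -/

import Mathlib

noncomputable section

/-- The error function `erf x = (2/√π) ∫₀ˣ exp(−s²) ds`. -/
def erf (x : ℝ) : ℝ := (2 / Real.sqrt Real.pi) * ∫ s in (0:ℝ)..x, Real.exp (-(s^2))

/-- The complementary error function. -/
def erfc (x : ℝ) : ℝ := 1 - erf x

/-- Physical data of the three-phase Stefan problem: positive thermal conductivities,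
specific heats, mass density, latent heats, and temperatures `B > C > D`. -/
structure Params where
  k₁ : ℝ
  k₂ : ℝ
  k₃ : ℝ
  c₁ : ℝ
  c₂ : ℝ
  c₃ : ℝ
  ρ : ℝ
  ℓ₁ : ℝ
  ℓ₂ : ℝ
  B : ℝ
  C : ℝ
  D : ℝ
  hk₁ : 0 < k₁
  hk₂ : 0 < k₂
  hk₃ : 0 < k₃
  hc₁ : 0 < c₁
  hc₂ : 0 < c₂
  hc₃ : 0 < c₃
  hρ : 0 < ρ
  hℓ₁ : 0 < ℓ₁
  hℓ₂ : 0 < ℓ₂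
  hBC : C < B
  hCD : D < C

namespace Params

/-- Thermal diffusivity of phase 1. -/
def α₁ (p : Params) : ℝ := p.k₁ / (p.ρ * p.c₁)

/-- Thermal diffusivity of phase 2. -/
def α₂ (p : Params) : ℝ := p.k₂ / (p.ρ * p.c₂)

/-- Thermal diffusivity of phase 3. -/
def α₃ (p : Params) : ℝ := p.k₃ / (p.ρ * p.c₃)

/-- Stefan number `Ste₁ = c₁(C−D)/ℓ₁`. -/
def Ste₁ (p : Params) : ℝ := p.c₁ * (p.C - p.D) / p.ℓ₁

/-- Stefan number `Ste₂ = c₂(B−C)/ℓ₂`. -/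
def Ste₂ (p : Params) : ℝ := p.c₂ * (p.B - p.C) / p.ℓ₂

/-- `φ(z) = z + (Ste₁/√π) exp(−z²)/erfc(z)`. -/
def φ (p : Params) (z : ℝ) : ℝ :=
  z + (p.Ste₁ / Real.sqrt Real.pi) * Real.exp (-(z^2)) / erfc z

/-- `H(z) = erf(z√(α₁/α₂)) − (Ste₂/√π)(ℓ₂/ℓ₁)√(k₂c₁/(k₁c₂)) exp(−z²α₁/α₂)/φ(z)`. -/
def H (p : Params) (z : ℝ) : ℝ :=
  erf (z * Real.sqrt (p.α₁ / p.α₂)) -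
    (p.Ste₂ / Real.sqrt Real.pi) * (p.ℓ₂ / p.ℓ₁) *
      Real.sqrt (p.k₂ * p.c₁ / (p.k₁ * p.c₂)) *
      (Real.exp (-(z^2) * (p.α₁ / p.α₂)) / p.φ z)

/-- `Q(z) = (ℓ₁/ℓ₂) φ(z) exp(z² α₁/α₂)`. -/
def Q (p : Params) (z : ℝ) : ℝ :=
  (p.ℓ₁ / p.ℓ₂) * p.φ z * Real.exp (z^2 * (p.α₁ / p.α₂))

/-- The function `T` arising from the Robin (convective) boundary condition with
heat-transfer coefficient `h₀` and bulk temperature `Ainf`. -/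
def T (p : Params) (h₀ Ainf : ℝ) (z : ℝ) : ℝ :=
  (p.Ste₂ / (Real.sqrt Real.pi * p.c₂)) * ((Ainf - p.B) / (p.B - p.C)) *
    Real.sqrt (p.k₃ * p.c₁ * p.c₃ / p.k₁) *
    (Real.exp (-(z^2) * p.α₁ * (1 / p.α₃ - 1 / p.α₂)) /
      (p.k₃ / (h₀ * Real.sqrt (Real.pi * p.α₃)) + erf (z * Real.sqrt (p.α₁ / p.α₃)))) -
  z * Real.exp (z^2 * (p.α₁ / p.α₂))

/-- The function `V` arising from the Dirichlet boundary condition with temperature `A`. -/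
def V (p : Params) (A : ℝ) (z : ℝ) : ℝ :=
  ((A - p.B) / p.ℓ₂) * Real.sqrt (p.c₁ * p.c₃ * p.k₃ / (Real.pi * p.k₁)) *
    (Real.exp (-(z^2) * (p.α₁ / p.α₃ - p.α₁ / p.α₂)) / erf (z * Real.sqrt (p.α₁ / p.α₃))) -
  z * Real.exp (z^2 * (p.α₁ / p.α₂))

/-- The function `P` arising from the Neumann boundary condition with flux coefficient `q₀`. -/
def P (p : Params) (q₀ : ℝ) (z : ℝ) : ℝ :=
  Real.exp (z^2 * (p.α₁ / p.α₂)) *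
    (-z + (q₀ / p.ℓ₂) * Real.sqrt (p.c₁ / (p.ρ * p.k₁)) * Real.exp (-(z^2) * (p.α₁ / p.α₃)))

/-- Critical heat-transfer coefficient `h₂`. -/
def h2 (p : Params) (Ainf z₀ : ℝ) : ℝ :=
  ((p.B - p.C) / (Ainf - p.B)) *
    Real.sqrt (p.k₂ * p.k₃ * p.c₂ / (Real.pi * p.c₃ * p.α₃)) *
    (1 / erf (z₀ * Real.sqrt (p.α₁ / p.α₂)))

/-- Critical heat-flux coefficient `q₂`. -/
def q2 (p : Params) (z₀ : ℝ) : ℝ :=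
  p.k₂ * (p.B - p.C) / (Real.sqrt (p.α₂ * Real.pi) * erf (z₀ * Real.sqrt (p.α₁ / p.α₂)))

end Params


open MeasureTheory

lemma gauss_intervalIntegrable (u v : ℝ) :
    IntervalIntegrable (fun s : ℝ => Real.exp (-(s^2))) volume u v :=
  (Real.continuous_exp.comp (by continuity)).intervalIntegrable u v

lemma erf_lt_one (x : ℝ) : erf x < 1 := by
  have hπ : 0 < Real.sqrt Real.pi := Real.sqrt_pos.2 Real.pi_pos
  have hint : (∫ s in Set.Ioi (0:ℝ), Real.exp (-(s^2))) = Real.sqrt Real.pi / 2 := by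
    have := integral_gaussian_Ioi 1
    simpa using this
  have key : (∫ s in (0:ℝ)..x, Real.exp (-(s^2))) < Real.sqrt Real.pi / 2 := by
    rcases le_or_gt x 0 with hx | hx
    · have h0 : (∫ s in (0:ℝ)..x, Real.exp (-(s^2))) ≤ 0 := by
        rw [intervalIntegral.integral_symm]
        simp only [neg_nonpos]
        exact intervalIntegral.integral_nonneg hx (fun s _ => (Real.exp_pos _).le)
      linarith
    · rw [intervalIntegral.integral_of_le hx.le, ← hint]
      have hle : IntegrableOn (fun s : ℝ => Real.exp (-(s^2))) (Set.Ioi (0:ℝ)) := by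
        exact (integrable_exp_neg_mul_sq one_pos).integrableOn.congr_fun
          (fun s _ => by ring_nf) measurableSet_Ioi
      have hle2 : IntegrableOn (fun s : ℝ => Real.exp (-(s^2))) (Set.Ioc (0:ℝ) x) :=
        hle.mono_set Set.Ioc_subset_Ioi_self
      have hle3 : IntegrableOn (fun s : ℝ => Real.exp (-(s^2))) (Set.Ioi x) :=
        hle.mono_set (Set.Ioi_subset_Ioi hx.le)
      have hsplit : Set.Ioc (0:ℝ) x ∪ Set.Ioi x = Set.Ioi (0:ℝ) :=
        Set.Ioc_union_Ioi_eq_Ioi hx.le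
      have hdisj : Disjoint (Set.Ioc (0:ℝ) x) (Set.Ioi x) := by
        apply Set.disjoint_left.2
        intro s hs hs'
        exact absurd hs.2 (not_le.2 hs')
      have heq : (∫ s in Set.Ioi (0:ℝ), Real.exp (-(s^2)))
          = (∫ s in Set.Ioc (0:ℝ) x, Real.exp (-(s^2)))
            + ∫ s in Set.Ioi x, Real.exp (-(s^2)) := by
        rw [← hsplit, setIntegral_union hdisj measurableSet_Ioi hle2 hle3]
      have hpos : 0 < ∫ s in Set.Ioi x, Real.exp (-(s^2)) := by
        rw [setIntegral_pos_iff_support_of_nonneg_ae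
          (Filter.Eventually.of_forall (fun s => (Real.exp_pos _).le)) hle3]
        have hsupp : (Function.support fun s : ℝ => Real.exp (-(s^2))) = Set.univ := by
          ext s; simp [Function.support, (Real.exp_pos _).ne']
        rw [hsupp, Set.univ_inter]
        simp [Real.volume_Ioi]
      linarith
  have : erf x = (2 / Real.sqrt Real.pi) * ∫ s in (0:ℝ)..x, Real.exp (-(s^2)) := rfl
  rw [this]
  calc (2 / Real.sqrt Real.pi) * ∫ s in (0:ℝ)..x, Real.exp (-(s^2))
      < (2 / Real.sqrt Real.pi) * (Real.sqrt Real.pi / 2) := by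
        exact mul_lt_mul_of_pos_left key (by positivity)
    _ = 1 := by field_simp

lemma erf_strictMono : StrictMono erf := by
  intro a b hab
  unfold erf
  apply mul_lt_mul_of_pos_left _ (by positivity : (0:ℝ) < 2 / Real.sqrt Real.pi)
  have hsum := intervalIntegral.integral_add_adjacent_intervals
    (gauss_intervalIntegrable 0 a) (gauss_intervalIntegrable a b)
  have hpos : 0 < ∫ s in a..b, Real.exp (-(s^2)) :=
    intervalIntegral.intervalIntegral_pos_of_pos (gauss_intervalIntegrable a b)
      (fun s => Real.exp_pos _) hab
  linarith

/-- for every `z > z₀` and every `w ≥ 0` with `erf(w√(α₁/α₂)) = H(z)`,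
one has `w < z`. -/
theorem free_boundaries_ordered (p : Params) (z₀ : ℝ)
    (hz₀ : 0 < z₀ ∧ p.H z₀ = 0) :
    ∀ z w : ℝ, z₀ < z → 0 ≤ w →
      erf (w * Real.sqrt (p.α₁ / p.α₂)) = p.H z → w < z := by
  obtain ⟨hz₀pos, -⟩ := hz₀
  intro z w hz hw herf
  have hzpos : 0 < z := hz₀pos.trans hz
  have hk₁ := p.hk₁; have hk₂ := p.hk₂; have hc₁ := p.hc₁; have hc₂ := p.hc₂
  have hρ := p.hρ; have hℓ₁ := p.hℓ₁; have hℓ₂ := p.hℓ₂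
  have hBC := p.hBC; have hCD := p.hCD
  have hπ : 0 < Real.sqrt Real.pi := Real.sqrt_pos.2 Real.pi_pos
  have hr : 0 < p.α₁ / p.α₂ := by
    unfold Params.α₁ Params.α₂; positivity
  have hsr : 0 < Real.sqrt (p.α₁ / p.α₂) := Real.sqrt_pos.2 hr
  have herfc : 0 < erfc z := by
    unfold erfc; linarith [erf_lt_one z]
  have hSte₁ : 0 < p.Ste₁ := by
    unfold Params.Ste₁; have : 0 < p.C - p.D := by linarith
    positivity
  have hSte₂ : 0 < p.Ste₂ := by
    unfold Params.Ste₂; have : 0 < p.B - p.C := by linarith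
    positivity
  have hφ : 0 < p.φ z := by
    unfold Params.φ
    have : 0 < (p.Ste₁ / Real.sqrt Real.pi) * Real.exp (-(z^2)) / erfc z := by positivity
    linarith
  have hK : 0 < (p.Ste₂ / Real.sqrt Real.pi) * (p.ℓ₂ / p.ℓ₁) *
      Real.sqrt (p.k₂ * p.c₁ / (p.k₁ * p.c₂)) *
      (Real.exp (-(z^2) * (p.α₁ / p.α₂)) / p.φ z) := by
    have hsq : 0 < Real.sqrt (p.k₂ * p.c₁ / (p.k₁ * p.c₂)) :=
      Real.sqrt_pos.2 (by positivity)
    positivity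
  have hlt : erf (w * Real.sqrt (p.α₁ / p.α₂)) < erf (z * Real.sqrt (p.α₁ / p.α₂)) := by
    rw [herf]
    unfold Params.H
    linarith
  have := erf_strictMono.lt_iff_lt.1 hlt
  exact (mul_lt_mul_iff_left₀ hsr).1 this
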